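/- Let y* ∈ [2,3], let 0 < z̄ < z₁ < 1 and η > 0, and let (ρ, ω) be a pair of differentiable functions solving the system on an open interval containing [z̄, z₁], satisfying for all z ∈ [z̄, z₁]: 1 − y*²z²ω(z)² > η, ρ(z) > 0, |ρ(z)| ≤ 1/(y*·z̄) and |ω(z)| ≤ 1/(y*·z̄). Then there exists t > 0 depending only on η and z̄ (and not on y* or on the particular solution) such that (ρ, ω) extends to a differentiable solution of the system on [z̄ − t, z₁] satisfying 1 − y*²z²ω(z)² > 0 and ρ(z) > 0 for all z ∈ [z̄ − t, z₁]. -/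

import Mathlib

/-- The rescaled self-similar isothermal Euler–Poisson system with parameter `y = y*`,
at the point `z`. -/
def EPSys (y : ℝ) (ρ ω : ℝ → ℝ) (z : ℝ) : Prop :=
  deriv ρ z =
    -(2 * y ^ 2 * z * ω z * ρ z * (ρ z - ω z)) / (1 - y ^ 2 * z ^ 2 * (ω z) ^ 2) ∧
  deriv ω z =
    (1 - 3 * ω z) / z +
      2 * y ^ 2 * z * (ω z) ^ 2 * (ρ z - ω z) / (1 - y ^ 2 * z ^ 2 * (ω z) ^ 2)

open Set Metric

noncomputable def epV (y : ℝ) : ℝ → ℝ × ℝ → ℝ × ℝ := fun z x =>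
  (-(2 * y ^ 2 * z * x.2 * x.1 * (x.1 - x.2)) / (1 - y ^ 2 * z ^ 2 * x.2 ^ 2),
   (1 - 3 * x.2) / z + 2 * y ^ 2 * z * x.2 ^ 2 * (x.1 - x.2) / (1 - y ^ 2 * z ^ 2 * x.2 ^ 2))

lemma epV_contDiffOn (y : ℝ) :
    ContDiffOn ℝ 1 (fun q : ℝ × ℝ × ℝ => epV y q.1 q.2)
      {q : ℝ × ℝ × ℝ | q.1 ≠ 0 ∧ 1 - y ^ 2 * q.1 ^ 2 * q.2.2 ^ 2 ≠ 0} := by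
  unfold epV
  apply ContDiffOn.prodMk
  · exact ContDiffOn.div (by fun_prop) (by fun_prop) (fun q hq => hq.2)
  · exact ContDiffOn.add
      (ContDiffOn.div (by fun_prop) (by fun_prop) (fun q hq => hq.1))
      (ContDiffOn.div (by fun_prop) (by fun_prop) (fun q hq => hq.2))

lemma pl_exists_with_ball {E : Type*} [NormedAddCommGroup E] [NormedSpace ℝ E] [CompleteSpace E]
    {v : ℝ → E → E} {tMin t₀ tMax : ℝ} (x₀ : E) {C R : ℝ} {L : NNReal}
    (ht₀ : t₀ ∈ Set.Icc tMin tMax) (hR : 0 ≤ R)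
    (hlip : ∀ t ∈ Set.Icc tMin tMax, LipschitzOnWith L (v t) (Metric.closedBall x₀ R))
    (hcont : ∀ x ∈ Metric.closedBall x₀ R, ContinuousOn (fun t => v t x) (Set.Icc tMin tMax))
    (hnorm : ∀ t ∈ Set.Icc tMin tMax, ∀ x ∈ Metric.closedBall x₀ R, ‖v t x‖ ≤ C)
    (hCR : C * max (tMax - t₀) (t₀ - tMin) ≤ R) :
    ∃ f : ℝ → E, f t₀ = x₀ ∧ ∀ t ∈ Set.Icc tMin tMax,
      f t ∈ Metric.closedBall x₀ R ∧ HasDerivWithinAt f (v t (f t)) (Set.Icc tMin tMax) t := by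
  have hC : 0 ≤ C := (norm_nonneg _).trans (hnorm t₀ ht₀ x₀ (Metric.mem_closedBall_self hR))
  lift C to NNReal using hC
  lift R to NNReal using hR
  have hf : IsPicardLindelof v (⟨t₀, ht₀⟩ : Set.Icc tMin tMax) x₀ R 0 C L :=
    { lipschitzOnWith := hlip, continuousOn := hcont, norm_le := hnorm,
      mul_max_le := by simpa using hCR }
  have hx : x₀ ∈ Metric.closedBall x₀ ((0 : NNReal) : ℝ) := Metric.mem_closedBall_self le_rfl
  obtain ⟨α, hα⟩ := ODE.FunSpace.exists_isFixedPt_next hf hx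
  refine ⟨α.compProj, ?_, fun t ht => ⟨α.compProj_mem_closedBall hf.mul_max_le, ?_⟩⟩
  · show α.compProj ((⟨t₀, ht₀⟩ : Set.Icc tMin tMax) : ℝ) = x₀
    rw [ODE.FunSpace.compProj_val, ← hα, ODE.FunSpace.next_apply₀]
  · apply ODE.hasDerivWithinAt_picard_Icc ht₀ hf.continuousOn_uncurry
      α.continuous_compProj.continuousOn (fun _ ht' ↦ α.compProj_mem_closedBall hf.mul_max_le)
      x₀ ht |>.congr_of_mem _ ht
    intro t' ht'
    nth_rw 1 [← hα]
    rw [ODE.FunSpace.compProj_of_mem ht', ODE.FunSpace.next_apply]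

lemma aux_abs_le_one {b c : ℝ} (h : b^2 ≤ 1 - c) (hc : 0 < c) : |b| ≤ 1 := by
  nlinarith [sq_abs b, abs_nonneg b, sq_nonneg (|b| - 1)]

lemma aux_sq_le {e d : ℝ} (h : |e| ≤ 3*d) (hd0 : 0 ≤ d) (hd1 : d ≤ 1) : e^2 ≤ 9*d := by
  nlinarith [abs_mul_abs_self e, abs_nonneg e]

set_option maxHeartbeats 2000000 in
/-- Quantitative continuation to the left: a solution which is a distance `η` from the
sonic line on `[z̄, z₁]` extends to the left by a time `t = t(η, z̄)` independent of
`y*`, `z₁` and the particular solution. -/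
theorem quantitative_left_continuation
    (η zbar : ℝ) (hη : 0 < η) (hzbar : 0 < zbar) (hzbar1 : zbar < 1) :
    ∃ t : ℝ, 0 < t ∧
      ∀ (y : ℝ), y ∈ Set.Icc (2 : ℝ) 3 →
      ∀ (z₁ : ℝ), zbar < z₁ → z₁ < 1 →
      ∀ ρ ω : ℝ → ℝ,
        (∃ A B : ℝ, A < zbar ∧ z₁ < B ∧
          ∀ z ∈ Set.Ioo A B,
            DifferentiableAt ℝ ρ z ∧ DifferentiableAt ℝ ω z ∧ EPSys y ρ ω z) →
        (∀ z ∈ Set.Icc zbar z₁,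
          η < 1 - y ^ 2 * z ^ 2 * (ω z) ^ 2 ∧ 0 < ρ z ∧
          |ρ z| ≤ 1 / (y * zbar) ∧ |ω z| ≤ 1 / (y * zbar)) →
        ∃ ρext ωext : ℝ → ℝ,
          Set.EqOn ρext ρ (Set.Icc zbar z₁) ∧
          Set.EqOn ωext ω (Set.Icc zbar z₁) ∧
          ∀ z ∈ Set.Icc (zbar - t) z₁,
            DifferentiableAt ℝ ρext z ∧ DifferentiableAt ℝ ωext z ∧
            EPSys y ρext ωext z ∧
            0 < 1 - y ^ 2 * z ^ 2 * (ωext z) ^ 2 ∧ 0 < ρext z := by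
  -- constants
  obtain ⟨η', hη'def⟩ : ∃ x : ℝ, x = min η (1/2) := ⟨_, rfl⟩
  have hη'pos : 0 < η' := hη'def ▸ lt_min hη (by norm_num)
  have hη'le : η' ≤ η := hη'def ▸ min_le_left _ _
  have hη'half : η' ≤ 1/2 := hη'def ▸ min_le_right _ _
  obtain ⟨M, hMdef⟩ : ∃ x : ℝ, x = 1/(2*zbar) + 1 := ⟨_, rfl⟩
  have hMpos : 0 < M := by rw [hMdef]; positivity
  have hM1 : 1 ≤ M := by
    have h : 0 ≤ 1/(2*zbar) := by positivity
    rw [hMdef]; linarith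
  obtain ⟨δ, hδdef⟩ : ∃ x : ℝ, x = min (η'/36) 1 := ⟨_, rfl⟩
  have hδpos : 0 < δ := hδdef ▸ lt_min (by positivity) one_pos
  have hδ36 : δ ≤ η'/36 := hδdef ▸ min_le_left _ _
  have hδ1 : δ ≤ 1 := hδdef ▸ min_le_right _ _
  obtain ⟨R, hRdef⟩ : ∃ x : ℝ, x = min (δ/(2*zbar)) 1 := ⟨_, rfl⟩
  have hRpos : 0 < R := hRdef ▸ lt_min (by positivity) one_pos
  have hR1 : R ≤ 1 := hRdef ▸ min_le_right _ _
  have hzR : zbar * R ≤ δ/2 := by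
    have h1 : zbar * R ≤ zbar * (δ/(2*zbar)) :=
      mul_le_mul_of_nonneg_left (hRdef ▸ min_le_left _ _) hzbar.le
    have h2 : zbar * (δ/(2*zbar)) = δ/2 := by field_simp
    linarith
  obtain ⟨C, hCdef⟩ : ∃ x : ℝ, x = (1+3*M)/(zbar/2) + 36*M^3/(η'/2) := ⟨_, rfl⟩
  have hCpos : 0 < C := by rw [hCdef]; positivity
  obtain ⟨a, hadef⟩ : ∃ x : ℝ, x = min (min (zbar/2) (δ/(2*M))) (R/C) := ⟨_, rfl⟩
  have hapos : 0 < a := hadef ▸ lt_min (lt_min (by positivity) (by positivity)) (by positivity)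
  have ha1 : a ≤ zbar/2 := hadef ▸ le_trans (min_le_left _ _) (min_le_left _ _)
  have ha2 : a * M ≤ δ/2 := by
    have h1 : a ≤ δ/(2*M) := hadef ▸ le_trans (min_le_left _ _) (min_le_right _ _)
    have h2 : a * M ≤ (δ/(2*M)) * M := mul_le_mul_of_nonneg_right h1 hMpos.le
    have h3 : (δ/(2*M)) * M = δ/2 := by field_simp
    linarith
  have ha3 : C * a ≤ R := by
    have h1 : a ≤ R/C := hadef ▸ min_le_right _ _
    have h2 : C * a ≤ C * (R/C) := mul_le_mul_of_nonneg_left h1 hCpos.le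
    have h3 : C * (R/C) = R := by field_simp
    linarith
  refine ⟨a/2, by positivity, ?_⟩
  intro y hy z₁ hz₁ hz₁1 ρ ω hsolE hbnd
  obtain ⟨A, B, hA, hB, hsol⟩ := hsolE
  obtain ⟨hy2, hy3⟩ := hy
  obtain ⟨tMin, htMindef⟩ : ∃ x : ℝ, x = zbar - a := ⟨_, rfl⟩
  obtain ⟨hsonic0, hρ0pos, hρ0b, hω0b⟩ := hbnd zbar (left_mem_Icc.2 hz₁.le)
  obtain ⟨x₀, hx₀def⟩ : ∃ x : ℝ × ℝ, x = (ρ zbar, ω zbar) := ⟨_, rfl⟩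
  have hyzpos : 0 < y * zbar := mul_pos (by linarith) hzbar
  have hdivle : 1/(y*zbar) ≤ 1/(2*zbar) :=
    one_div_le_one_div_of_le (by positivity) (mul_le_mul_of_nonneg_right hy2 hzbar.le)
  have hρ0b' : |ρ zbar| ≤ 1/(2*zbar) := hρ0b.trans hdivle
  have hω0b' : |ω zbar| ≤ 1/(2*zbar) := hω0b.trans hdivle
  -- membership in ball gives coordinate bounds
  have hball : ∀ x : ℝ × ℝ, x ∈ closedBall x₀ R → |x.1| ≤ M ∧ |x.2| ≤ M ∧
      |x.1 - ρ zbar| ≤ R ∧ |x.2 - ω zbar| ≤ R := by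
    intro x hx
    rw [hx₀def, mem_closedBall, Prod.dist_eq, max_le_iff, Real.dist_eq, Real.dist_eq] at hx
    obtain ⟨h1, h2⟩ := hx
    have e1 : |x.1| ≤ |ρ zbar| + |x.1 - ρ zbar| := by
      calc |x.1| = |ρ zbar + (x.1 - ρ zbar)| := by ring_nf
        _ ≤ |ρ zbar| + |x.1 - ρ zbar| := abs_add_le _ _
    have e2 : |x.2| ≤ |ω zbar| + |x.2 - ω zbar| := by
      calc |x.2| = |ω zbar + (x.2 - ω zbar)| := by ring_nf
        _ ≤ |ω zbar| + |x.2 - ω zbar| := abs_add_le _ _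
    refine ⟨by rw [hMdef]; linarith, by rw [hMdef]; linarith, h1, h2⟩
  have hzrange : ∀ z ∈ Icc tMin zbar, zbar/2 ≤ z ∧ z ≤ 1 ∧ 0 < z ∧ |z - zbar| ≤ a := by
    intro z hz
    obtain ⟨h1, h2⟩ := hz
    rw [htMindef] at h1
    exact ⟨by linarith, by linarith, by linarith, abs_le.2 ⟨by linarith, by linarith⟩⟩
  -- subsonic estimate on the tube
  have hsub : ∀ z ∈ Icc tMin zbar, ∀ x ∈ closedBall x₀ R, η'/2 ≤ 1 - y^2*z^2*x.2^2 := by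
    intro z hz x hx
    obtain ⟨-, hwM, -, hw⟩ := hball x hx
    obtain ⟨hz1, hz2, hz3, hz4⟩ := hzrange z hz
    have he : |z*x.2 - zbar*(ω zbar)| ≤ δ := by
      have hrw : z*x.2 - zbar*(ω zbar) = (z-zbar)*x.2 + zbar*(x.2 - ω zbar) := by ring
      rw [hrw]
      have h1 : |(z-zbar)*x.2| ≤ a*M := by
        rw [abs_mul]; exact mul_le_mul hz4 hwM (abs_nonneg _) hapos.le
      have h2 : |zbar*(x.2 - ω zbar)| ≤ zbar*R := by
        rw [abs_mul, abs_of_pos hzbar]; exact mul_le_mul_of_nonneg_left hw hzbar.le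
      calc |(z-zbar)*x.2 + zbar*(x.2 - ω zbar)| ≤ |(z-zbar)*x.2| + |zbar*(x.2 - ω zbar)| :=
            abs_add_le _ _
        _ ≤ a*M + zbar*R := add_le_add h1 h2
        _ ≤ δ := by linarith
    have hring : (y*zbar*(ω zbar))^2 = y^2*zbar^2*(ω zbar)^2 := by ring
    have hb1 : (y*zbar*(ω zbar))^2 ≤ 1 - η' := by linarith [hsonic0, hη'le]
    have hb2 : |y*zbar*(ω zbar)| ≤ 1 := aux_abs_le_one hb1 hη'pos
    have hy3' : |y| ≤ 3 := abs_le.2 ⟨by linarith, hy3⟩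
    have hye : |y*(z*x.2 - zbar*(ω zbar))| ≤ 3*δ := by
      rw [abs_mul]; exact mul_le_mul hy3' he (abs_nonneg _) (by norm_num)
    have hprod : |(y*zbar*(ω zbar)) * (y*(z*x.2 - zbar*(ω zbar)))| ≤ 1*(3*δ) := by
      rw [abs_mul]; exact mul_le_mul hb2 hye (abs_nonneg _) zero_le_one
    have hprod2 : (y*zbar*(ω zbar)) * (y*(z*x.2 - zbar*(ω zbar))) ≤ 3*δ := by
      have := (abs_le.1 hprod).2; linarith
    have he2 : (y*(z*x.2 - zbar*(ω zbar)))^2 ≤ 9*δ := aux_sq_le hye hδpos.le hδ1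
    have hid : y^2*z^2*x.2^2 = (y*zbar*(ω zbar) + y*(z*x.2 - zbar*(ω zbar)))^2 := by ring
    have hsq : (y*zbar*(ω zbar) + y*(z*x.2 - zbar*(ω zbar)))^2
        = (y*zbar*(ω zbar))^2 + 2*((y*zbar*(ω zbar)) * (y*(z*x.2 - zbar*(ω zbar))))
          + (y*(z*x.2 - zbar*(ω zbar)))^2 := by ring
    linarith [hid, hsq, hb1, hprod2, he2, hδ36]
  -- norm bound for the vector field on the tube
  have hnorm : ∀ z ∈ Icc tMin zbar, ∀ x ∈ closedBall x₀ R, ‖epV y z x‖ ≤ C := by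
    intro z hz x hx
    obtain ⟨hpM, hwM, -, -⟩ := hball x hx
    obtain ⟨hz1, hz2, hz3, -⟩ := hzrange z hz
    have hD : η'/2 ≤ 1 - y^2*z^2*x.2^2 := hsub z hz x hx
    have hDpos : 0 < 1 - y^2*z^2*x.2^2 := lt_of_lt_of_le (by positivity) hD
    have hy3' : |y| ≤ 3 := abs_le.2 ⟨by linarith, hy3⟩
    have hz1' : |z| ≤ 1 := abs_le.2 ⟨by linarith, hz2⟩
    have hpw : |x.1 - x.2| ≤ 2*M := by
      calc |x.1 - x.2| ≤ |x.1| + |x.2| := abs_sub _ _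
        _ ≤ 2*M := by linarith
    have hnum1 : |2 * y ^ 2 * z * x.2 * x.1 * (x.1 - x.2)| ≤ 36*M^3 := by
      have e : |2 * y ^ 2 * z * x.2 * x.1 * (x.1 - x.2)|
          = 2 * |y|^2 * |z| * |x.2| * |x.1| * |x.1 - x.2| := by
        simp [abs_mul, abs_pow, abs_two]
      rw [e]
      have h36 : 2 * |y|^2 * |z| * |x.2| * |x.1| * |x.1 - x.2|
          ≤ 2 * 3^2 * 1 * M * M * (2*M) := by
        gcongr <;> first | exact abs_nonneg _ | positivity | assumption
      calc 2 * |y|^2 * |z| * |x.2| * |x.1| * |x.1 - x.2| ≤ 2 * 3^2 * 1 * M * M * (2*M) := h36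
        _ = 36*M^3 := by ring
    have hnum2 : |2 * y ^ 2 * z * x.2 ^ 2 * (x.1 - x.2)| ≤ 36*M^3 := by
      have e : |2 * y ^ 2 * z * x.2 ^ 2 * (x.1 - x.2)|
          = 2 * |y|^2 * |z| * |x.2|^2 * |x.1 - x.2| := by
        simp [abs_mul, abs_pow, abs_two]
      rw [e]
      have hM2 : |x.2|^2 ≤ M^2 := pow_le_pow_left₀ (abs_nonneg _) hwM 2
      have h36 : 2 * |y|^2 * |z| * |x.2|^2 * |x.1 - x.2|
          ≤ 2 * 3^2 * 1 * M^2 * (2*M) := by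
        gcongr <;> first | exact abs_nonneg _ | positivity | assumption
      calc 2 * |y|^2 * |z| * |x.2|^2 * |x.1 - x.2| ≤ 2 * 3^2 * 1 * M^2 * (2*M) := h36
        _ = 36*M^3 := by ring
    have habsD : η'/2 ≤ |1 - y ^ 2 * z ^ 2 * x.2 ^ 2| := by
      rw [abs_of_pos hDpos]; exact hD
    have hfrac1 : |2 * y ^ 2 * z * x.2 * x.1 * (x.1 - x.2)| / |1 - y ^ 2 * z ^ 2 * x.2 ^ 2|
        ≤ 36*M^3/(η'/2) :=
      div_le_div₀ (by positivity) hnum1 (by positivity) habsD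
    have hfrac2 : |2 * y ^ 2 * z * x.2 ^ 2 * (x.1 - x.2)| / |1 - y ^ 2 * z ^ 2 * x.2 ^ 2|
        ≤ 36*M^3/(η'/2) :=
      div_le_div₀ (by positivity) hnum2 (by positivity) habsD
    have hlin : |1 - 3*x.2| / |z| ≤ (1+3*M)/(zbar/2) := by
      refine div_le_div₀ (by positivity) ?_ (by positivity) ?_
      · calc |1 - 3*x.2| ≤ |(1:ℝ)| + |3*x.2| := abs_sub _ _
          _ = 1 + 3*|x.2| := by rw [abs_one, abs_mul]; norm_num
          _ ≤ 1 + 3*M := by linarith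
      · rw [abs_of_pos hz3]; linarith
    rw [Prod.norm_def]
    apply max_le
    · show ‖(epV y z x).1‖ ≤ C
      rw [hCdef]
      have : ‖(epV y z x).1‖
          = |2 * y ^ 2 * z * x.2 * x.1 * (x.1 - x.2)| / |1 - y ^ 2 * z ^ 2 * x.2 ^ 2| := by
        show |-(2 * y ^ 2 * z * x.2 * x.1 * (x.1 - x.2)) / (1 - y ^ 2 * z ^ 2 * x.2 ^ 2)| = _
        rw [abs_div, abs_neg]
      rw [this]
      have h0 : 0 ≤ (1+3*M)/(zbar/2) := by positivity
      linarith [hfrac1]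
    · show ‖(epV y z x).2‖ ≤ C
      rw [hCdef]
      have : ‖(epV y z x).2‖
          ≤ |1 - 3*x.2| / |z|
            + |2 * y ^ 2 * z * x.2 ^ 2 * (x.1 - x.2)| / |1 - y ^ 2 * z ^ 2 * x.2 ^ 2| := by
        show |(1 - 3*x.2)/z + 2 * y ^ 2 * z * x.2 ^ 2 * (x.1 - x.2) / (1 - y ^ 2 * z ^ 2 * x.2 ^ 2)| ≤ _
        refine le_trans (abs_add_le _ _) ?_
        simp only [abs_div]
        exact le_refl _
      linarith [hlin, hfrac2]
  -- open set where the vector field is smooth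
  have hUopen : IsOpen {q : ℝ × ℝ × ℝ | 0 < q.1 ∧ 0 < 1 - y^2*q.1^2*q.2.2^2} := by
    have h1 : IsOpen {q : ℝ × ℝ × ℝ | 0 < q.1} :=
      isOpen_lt continuous_const continuous_fst
    have h2 : IsOpen {q : ℝ × ℝ × ℝ | 0 < 1 - y^2*q.1^2*q.2.2^2} :=
      isOpen_lt continuous_const (by fun_prop)
    exact h1.inter h2
  have hSU : ∀ z ∈ Icc tMin zbar, ∀ x ∈ closedBall x₀ R,
      ((z, x) : ℝ × ℝ × ℝ) ∈ {q : ℝ × ℝ × ℝ | 0 < q.1 ∧ 0 < 1 - y^2*q.1^2*q.2.2^2} := by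
    intro z hz x hx
    obtain ⟨hz1, -, hz3, -⟩ := hzrange z hz
    exact ⟨hz3, lt_of_lt_of_le (by positivity) (hsub z hz x hx)⟩
  have hWc : ContDiffOn ℝ 1 (fun q : ℝ × ℝ × ℝ => epV y q.1 q.2)
      {q : ℝ × ℝ × ℝ | 0 < q.1 ∧ 0 < 1 - y^2*q.1^2*q.2.2^2} :=
    (epV_contDiffOn y).mono (fun q hq => ⟨ne_of_gt hq.1, ne_of_gt hq.2⟩)
  -- a Lipschitz constant, uniform on the tube, by compactness
  obtain ⟨K, hKlip⟩ : ∃ K : NNReal, ∀ z ∈ Icc tMin zbar,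
      LipschitzOnWith K (epV y z) (closedBall x₀ R) := by
    set S : Set (ℝ × ℝ × ℝ) := (Icc tMin zbar) ×ˢ (closedBall x₀ R) with hSdef
    have hSsub : S ⊆ {q : ℝ × ℝ × ℝ | 0 < q.1 ∧ 0 < 1 - y^2*q.1^2*q.2.2^2} := by
      rintro ⟨z, x⟩ hq
      exact hSU z hq.1 x hq.2
    have hconv : Convex ℝ S := (convex_Icc _ _).prod (convex_closedBall _ _)
    have hcomp : IsCompact S := isCompact_Icc.prod (isCompact_closedBall _ _)
    have hdiffW : ∀ q ∈ S, DifferentiableAt ℝ (fun q : ℝ × ℝ × ℝ => epV y q.1 q.2) q :=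
      fun q hq => (hWc.differentiableOn one_ne_zero).differentiableAt
        (hUopen.mem_nhds (hSsub hq))
    have hfc : ContinuousOn (fderiv ℝ (fun q : ℝ × ℝ × ℝ => epV y q.1 q.2)) S :=
      (hWc.continuousOn_fderiv_of_isOpen hUopen le_rfl).mono hSsub
    obtain ⟨Kb, hKb⟩ := hcomp.exists_bound_of_continuousOn hfc
    refine ⟨Real.toNNReal Kb, fun z hz => ?_⟩
    have hbound : ∀ q ∈ S, ‖fderiv ℝ (fun q : ℝ × ℝ × ℝ => epV y q.1 q.2) q‖₊
        ≤ Real.toNNReal Kb := by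
      intro q hq
      have h1 : ‖fderiv ℝ (fun q : ℝ × ℝ × ℝ => epV y q.1 q.2) q‖ ≤ max Kb 0 :=
        (hKb q hq).trans (le_max_left _ _)
      rw [← NNReal.coe_le_coe, coe_nnnorm, Real.coe_toNNReal']
      exact h1
    have hlipS : LipschitzOnWith (Real.toNNReal Kb) (fun q : ℝ × ℝ × ℝ => epV y q.1 q.2) S :=
      hconv.lipschitzOnWith_of_nnnorm_fderiv_le hdiffW hbound
    rw [lipschitzOnWith_iff_dist_le_mul]
    intro x hx x' hx'
    have hdle := (lipschitzOnWith_iff_dist_le_mul.1 hlipS) (z, x) ⟨hz, hx⟩ (z, x') ⟨hz, hx'⟩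
    have heq : dist ((z,x) : ℝ × ℝ × ℝ) ((z,x') : ℝ × ℝ × ℝ) = dist x x' := by
      rw [Prod.dist_eq, dist_self]; exact max_eq_right dist_nonneg
    calc dist (epV y z x) (epV y z x')
        ≤ Real.toNNReal Kb * dist ((z,x) : ℝ × ℝ × ℝ) ((z,x') : ℝ × ℝ × ℝ) := hdle
      _ = Real.toNNReal Kb * dist x x' := by rw [heq]
  -- Picard-Lindelöf
  obtain ⟨f, hf0, hf2⟩ := pl_exists_with_ball (v := epV y) (tMin := tMin) (t₀ := zbar)
      (tMax := zbar) x₀ (C := C) (R := R) (L := K)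
      (⟨by rw [htMindef]; linarith, le_rfl⟩)
      (hRpos.le)
      (hKlip)
      (by
        intro x hx
        have hWcont : ContinuousOn (fun q : ℝ × ℝ × ℝ => epV y q.1 q.2)
            {q : ℝ × ℝ × ℝ | 0 < q.1 ∧ 0 < 1 - y^2*q.1^2*q.2.2^2} := hWc.continuousOn
        exact hWcont.comp ((continuous_id.prodMk continuous_const).continuousOn)
          (fun z hz => hSU z hz x hx))
      (hnorm)
      (by
        have : max (zbar - zbar) (zbar - tMin) = a := by
          rw [htMindef]
          simp only [sub_self, sub_sub_cancel]
          exact max_eq_right (by linarith)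
        rw [this]; exact ha3)
  -- continuity of the solution
  have hfcont : ContinuousOn f (Icc tMin zbar) :=
    fun u hu => ((hf2 u hu).2).continuousWithinAt
  have hPcont : ContinuousOn (fun u => (f u).1) (Icc tMin zbar) :=
    continuous_fst.comp_continuousOn hfcont
  -- positivity of the first component via uniqueness
  have hDne : ∀ u ∈ Icc tMin zbar, (1 - y^2*u^2*((f u).2)^2) ≠ 0 := by
    intro u hu
    have := hsub u hu (f u) (hf2 u hu).1
    exact ne_of_gt (lt_of_lt_of_le (by positivity) this)
  obtain ⟨gcoef, hgcoefdef⟩ : ∃ g : ℝ → ℝ, g = fun u =>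
      if u ∈ Icc tMin zbar then
        -(2*y^2*u*(f u).2*((f u).1 - (f u).2)) / (1 - y^2*u^2*((f u).2)^2)
      else 0 := ⟨_, rfl⟩
  obtain ⟨Kg, hKgdef⟩ : ∃ x : ℝ, x = 36*M^2/(η'/2) := ⟨_, rfl⟩
  have hKgpos : 0 < Kg := by rw [hKgdef]; positivity
  have hgb : ∀ u, |gcoef u| ≤ Kg := by
    intro u
    rw [hgcoefdef]
    by_cases hu : u ∈ Icc tMin zbar
    · simp only [if_pos hu]
      obtain ⟨hpM, hwM, -, -⟩ := hball (f u) (hf2 u hu).1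
      obtain ⟨hz1, hz2, hz3, -⟩ := hzrange u hu
      have hD : η'/2 ≤ 1 - y^2*u^2*((f u).2)^2 := hsub u hu (f u) (hf2 u hu).1
      have hDpos : (0:ℝ) < 1 - y^2*u^2*((f u).2)^2 := lt_of_lt_of_le (by positivity) hD
      have hy3' : |y| ≤ 3 := abs_le.2 ⟨by linarith, hy3⟩
      have hz1' : |u| ≤ 1 := abs_le.2 ⟨by linarith, hz2⟩
      have hpw : |(f u).1 - (f u).2| ≤ 2*M := by
        calc |(f u).1 - (f u).2| ≤ |(f u).1| + |(f u).2| := abs_sub _ _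
          _ ≤ 2*M := by linarith
      have hnum : |2*y^2*u*(f u).2*((f u).1 - (f u).2)| ≤ 36*M^2 := by
        have e : |2*y^2*u*(f u).2*((f u).1 - (f u).2)|
            = 2 * |y|^2 * |u| * |(f u).2| * |(f u).1 - (f u).2| := by
          simp [abs_mul, abs_pow, abs_two]
        rw [e]
        have h36 : 2 * |y|^2 * |u| * |(f u).2| * |(f u).1 - (f u).2|
            ≤ 2 * 3^2 * 1 * M * (2*M) := by gcongr <;> exact abs_nonneg _
        calc 2 * |y|^2 * |u| * |(f u).2| * |(f u).1 - (f u).2|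
            ≤ 2 * 3^2 * 1 * M * (2*M) := h36
          _ = 36*M^2 := by ring
      have habsD : η'/2 ≤ |1 - y^2*u^2*((f u).2)^2| := by
        rw [abs_of_pos hDpos]; exact hD
      rw [abs_div, abs_neg, hKgdef]
      exact div_le_div₀ (by positivity) hnum (by positivity) habsD
    · simp only [if_neg hu, abs_zero]
      exact hKgpos.le
  have hlipv' : ∀ u : ℝ, LipschitzOnWith (Real.toNNReal Kg)
      (fun p : ℝ => gcoef u * p) (univ : Set ℝ) := by
    intro u
    apply LipschitzWith.lipschitzOnWith
    refine LipschitzWith.of_dist_le_mul fun p q => ?_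
    rw [Real.dist_eq, Real.dist_eq, ← mul_sub, abs_mul, Real.coe_toNNReal']
    have h1 : |gcoef u| ≤ max Kg 0 := (hgb u).trans (le_max_left _ _)
    exact mul_le_mul_of_nonneg_right h1 (abs_nonneg _)
  have hIciD : ∀ u ∈ Ico tMin zbar,
      HasDerivWithinAt (fun w => (f w).1) (gcoef u * (f u).1) (Ici u) u := by
    intro u hu
    have huIcc : u ∈ Icc tMin zbar := ⟨hu.1, hu.2.le⟩
    have hd := (hf2 u huIcc).2
    have hmem : Icc tMin zbar ∈ nhdsWithin u (Ici u) := by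
      refine mem_nhdsWithin.2 ⟨Iio zbar, isOpen_Iio, hu.2, ?_⟩
      rintro p ⟨hp1, hp2⟩
      exact ⟨le_trans hu.1 hp2, hp1.le⟩
    have hd2 := hd.mono_of_mem_nhdsWithin hmem
    have hfst := (ContinuousLinearMap.fst ℝ ℝ ℝ).hasFDerivAt.comp_hasDerivWithinAt u hd2
    have hval : (ContinuousLinearMap.fst ℝ ℝ ℝ) (epV y u (f u)) = gcoef u * (f u).1 := by
      show (epV y u (f u)).1 = gcoef u * (f u).1
      rw [hgcoefdef]
      simp only [if_pos huIcc]
      show -(2 * y ^ 2 * u * (f u).2 * (f u).1 * ((f u).1 - (f u).2))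
          / (1 - y ^ 2 * u ^ 2 * ((f u).2) ^ 2) = _
      rw [div_mul_eq_mul_div]
      congr 1
      ring
    rw [hval] at hfst
    exact hfst
  have hnz : ∀ z₀ ∈ Ico tMin zbar, (f z₀).1 ≠ 0 := by
    intro z₀ hz₀ h0
    have huniq : EqOn (fun u => (f u).1) (fun _ => (0:ℝ)) (Icc z₀ zbar) := by
      refine ODE_solution_unique_of_mem_Icc_right
        (v := fun u p => gcoef u * p) (s := fun _ => (univ : Set ℝ))
        (K := Real.toNNReal Kg) (fun u _ => hlipv' u)
        (hPcont.mono (Icc_subset_Icc hz₀.1 le_rfl)) ?_ (fun _ _ => mem_univ _)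
        continuousOn_const ?_ (fun _ _ => mem_univ _) (by simpa using h0)
      · intro u hu
        exact hIciD u ⟨le_trans hz₀.1 hu.1, hu.2⟩
      · intro u hu
        simpa using (hasDerivWithinAt_const u (Ici u) (0:ℝ))
    have hzbarmem : zbar ∈ Icc z₀ zbar := ⟨hz₀.2.le, le_rfl⟩
    have := huniq hzbarmem
    simp only [hf0, hx₀def] at this
    exact (ne_of_gt hρ0pos) this
  have hppos : ∀ u ∈ Icc tMin zbar, 0 < (f u).1 := by
    intro u hu
    by_contra hle
    push_neg at hle
    have hcont : ContinuousOn (fun w => (f w).1) (Icc u zbar) :=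
      hPcont.mono (Icc_subset_Icc hu.1 le_rfl)
    have h0mem : (0:ℝ) ∈ Icc ((f u).1) ((f zbar).1) := by
      constructor
      · exact hle
      · rw [hf0, hx₀def]; exact hρ0pos.le
    obtain ⟨z₀, hz₀mem, hz₀⟩ := intermediate_value_Icc hu.2 hcont h0mem
    have hne : z₀ ≠ zbar := by
      intro h
      rw [h] at hz₀
      simp only [hf0, hx₀def] at hz₀
      exact (ne_of_gt hρ0pos) hz₀
    exact hnz z₀ ⟨le_trans hu.1 hz₀mem.1, lt_of_le_of_ne hz₀mem.2 hne⟩ hz₀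
  -- the extensions
  refine ⟨fun u => if u < zbar then (f u).1 else ρ u,
    fun u => if u < zbar then (f u).2 else ω u, ?_, ?_, ?_⟩
  · intro u hu; exact if_neg (not_lt.2 hu.1)
  · intro u hu; exact if_neg (not_lt.2 hu.1)
  intro z hz
  have hteq : zbar - a/2 ≤ z := hz.1
  rcases lt_trichotomy z zbar with hlt | heq | hgt
  -- Case 1 : z < zbar, use the Picard–Lindelöf solution
  · have hzIcc : z ∈ Icc tMin zbar := ⟨by rw [htMindef]; linarith, hlt.le⟩
    have hIoo1 : tMin < z := by rw [htMindef]; linarith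
    have hballz := (hf2 z hzIcc).1
    have hda : HasDerivAt f (epV y z (f z)) z :=
      ((hf2 z hzIcc).2).hasDerivAt (Icc_mem_nhds hIoo1 hlt)
    have hdaρ : HasDerivAt (fun u => (f u).1) ((epV y z (f z)).1) z :=
      (ContinuousLinearMap.fst ℝ ℝ ℝ).hasFDerivAt.comp_hasDerivAt z hda
    have hdaω : HasDerivAt (fun u => (f u).2) ((epV y z (f z)).2) z :=
      (ContinuousLinearMap.snd ℝ ℝ ℝ).hasFDerivAt.comp_hasDerivAt z hda
    have hevIio : ∀ᶠ u in nhds z, u ∈ Iio zbar := Iio_mem_nhds hlt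
    have hevρ : (fun u => if u < zbar then (f u).1 else ρ u) =ᶠ[nhds z]
        (fun u => (f u).1) := hevIio.mono fun u hu => if_pos hu
    have hevω : (fun u => if u < zbar then (f u).2 else ω u) =ᶠ[nhds z]
        (fun u => (f u).2) := hevIio.mono fun u hu => if_pos hu
    have hρd : HasDerivAt (fun u => if u < zbar then (f u).1 else ρ u)
        ((epV y z (f z)).1) z := hdaρ.congr_of_eventuallyEq hevρ
    have hωd : HasDerivAt (fun u => if u < zbar then (f u).2 else ω u)
        ((epV y z (f z)).2) z := hdaω.congr_of_eventuallyEq hevω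
    have e1 : (if z < zbar then (f z).1 else ρ z) = (f z).1 := if_pos hlt
    have e2 : (if z < zbar then (f z).2 else ω z) = (f z).2 := if_pos hlt
    refine ⟨hρd.differentiableAt, hωd.differentiableAt, ⟨?_, ?_⟩, ?_, ?_⟩
    · rw [hρd.deriv]
      simp only [e1, e2]
      rfl
    · rw [hωd.deriv]
      simp only [e1, e2]
      rfl
    · simp only [e2]
      exact lt_of_lt_of_le (by positivity) (hsub z hzIcc (f z) hballz)
    · simp only [e1]
      exact hppos z hzIcc
  -- Case 2 : z = zbar, glue the two solutions
  · subst heq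
    have hzAB : z ∈ Ioo A B := ⟨hA, by linarith⟩
    obtain ⟨hdρ0, hdω0, hEP⟩ := hsol z hzAB
    obtain ⟨hEP1, hEP2⟩ := hEP
    have hzbarIcc : z ∈ Icc tMin z := ⟨by rw [htMindef]; linarith, le_rfl⟩
    have hL : HasDerivWithinAt f (epV y z x₀) (Icc tMin z) z := by
      have := (hf2 z hzbarIcc).2
      rwa [hf0] at this
    have hLι : HasDerivWithinAt f (epV y z x₀) (Iic z) z :=
      hL.mono_of_mem_nhdsWithin (Icc_mem_nhdsLE (by rw [htMindef]; linarith))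
    have hext_eqρ : ∀ u ∈ Iic z, (if u < z then (f u).1 else ρ u) = (f u).1 := by
      intro u hu
      rcases lt_or_eq_of_le (mem_Iic.1 hu) with h | h
      · exact if_pos h
      · rw [h]
        simp [hf0, hx₀def]
    have hext_eqω : ∀ u ∈ Iic z, (if u < z then (f u).2 else ω u) = (f u).2 := by
      intro u hu
      rcases lt_or_eq_of_le (mem_Iic.1 hu) with h | h
      · exact if_pos h
      · rw [h]
        simp [hf0, hx₀def]
    have hLρ : HasDerivWithinAt (fun u => if u < z then (f u).1 else ρ u)
        ((epV y z x₀).1) (Iic z) z := by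
      have h := (ContinuousLinearMap.fst ℝ ℝ ℝ).hasFDerivAt.comp_hasDerivWithinAt z hLι
      exact h.congr hext_eqρ (hext_eqρ z (mem_Iic.2 le_rfl))
    have hLω : HasDerivWithinAt (fun u => if u < z then (f u).2 else ω u)
        ((epV y z x₀).2) (Iic z) z := by
      have h := (ContinuousLinearMap.snd ℝ ℝ ℝ).hasFDerivAt.comp_hasDerivWithinAt z hLι
      exact h.congr hext_eqω (hext_eqω z (mem_Iic.2 le_rfl))
    have hval1 : deriv ρ z = (epV y z x₀).1 := by rw [hx₀def]; exact hEP1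
    have hval2 : deriv ω z = (epV y z x₀).2 := by rw [hx₀def]; exact hEP2
    have hRρ : HasDerivWithinAt (fun u => if u < z then (f u).1 else ρ u)
        ((epV y z x₀).1) (Ici z) z := by
      have h0 : HasDerivAt ρ ((epV y z x₀).1) z := hval1 ▸ hdρ0.hasDerivAt
      exact (h0.hasDerivWithinAt).congr
        (fun u hu => if_neg (not_lt.2 hu)) (if_neg (lt_irrefl _))
    have hRω : HasDerivWithinAt (fun u => if u < z then (f u).2 else ω u)
        ((epV y z x₀).2) (Ici z) z := by
      have h0 : HasDerivAt ω ((epV y z x₀).2) z := hval2 ▸ hdω0.hasDerivAt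
      exact (h0.hasDerivWithinAt).congr
        (fun u hu => if_neg (not_lt.2 hu)) (if_neg (lt_irrefl _))
    have hρglue : HasDerivAt (fun u => if u < z then (f u).1 else ρ u)
        ((epV y z x₀).1) z := by
      have h := hLρ.union hRρ
      rw [Iic_union_Ici] at h
      exact hasDerivWithinAt_univ.1 h
    have hωglue : HasDerivAt (fun u => if u < z then (f u).2 else ω u)
        ((epV y z x₀).2) z := by
      have h := hLω.union hRω
      rw [Iic_union_Ici] at h
      exact hasDerivWithinAt_univ.1 h
    have e1 : (if z < z then (f z).1 else ρ z) = ρ z := if_neg (lt_irrefl _)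
    have e2 : (if z < z then (f z).2 else ω z) = ω z := if_neg (lt_irrefl _)
    refine ⟨hρglue.differentiableAt, hωglue.differentiableAt, ⟨?_, ?_⟩, ?_, ?_⟩
    · rw [hρglue.deriv]
      simp only [e1, e2]
      rw [hx₀def]
      rfl
    · rw [hωglue.deriv]
      simp only [e1, e2]
      rw [hx₀def]
      rfl
    · simp only [e2]
      linarith [hsonic0]
    · simp only [e1]
      exact hρ0pos
  -- Case 3 : zbar < z, the original solution
  · have hzI : z ∈ Icc zbar z₁ := ⟨hgt.le, hz.2⟩
    have hzAB : z ∈ Ioo A B := ⟨by linarith, by linarith [hz.2]⟩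
    obtain ⟨hdρ, hdω, hEP⟩ := hsol z hzAB
    obtain ⟨hEP1, hEP2⟩ := hEP
    have hevIoi : ∀ᶠ u in nhds z, u ∈ Ioi zbar := Ioi_mem_nhds hgt
    have hevρ : (fun u => if u < zbar then (f u).1 else ρ u) =ᶠ[nhds z] ρ :=
      hevIoi.mono fun u hu => if_neg (not_lt.2 (le_of_lt hu))
    have hevω : (fun u => if u < zbar then (f u).2 else ω u) =ᶠ[nhds z] ω :=
      hevIoi.mono fun u hu => if_neg (not_lt.2 (le_of_lt hu))
    have e1 : (if z < zbar then (f z).1 else ρ z) = ρ z := if_neg (not_lt.2 hgt.le)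
    have e2 : (if z < zbar then (f z).2 else ω z) = ω z := if_neg (not_lt.2 hgt.le)
    obtain ⟨hso, hpo, -, -⟩ := hbnd z hzI
    refine ⟨(hevρ.differentiableAt_iff).2 hdρ, (hevω.differentiableAt_iff).2 hdω,
      ⟨?_, ?_⟩, ?_, ?_⟩
    · rw [hevρ.deriv_eq]
      simp only [e1, e2]
      exact hEP1
    · rw [hevω.deriv_eq]
      simp only [e1, e2]
      exact hEP2
    · simp only [e2]
      linarith
    · simp only [e1]
      exact hpo
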